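/- Consider a single robot with dynamics x' = v, v' = a, subject to 0 ≤ v ≤ v_max and a_min ≤ a ≤ a_max with a_min < 0 < a_max. From initial state (x₀, v₀) with 0 ≤ v₀ ≤ v_max, the set of reachable positions at time t > 0 is exactly the closed interval [x_min(t), x_max(t)], where x_min(t) is the position under maximal braking (accelerate a_min until v = 0, then stay) and x_max(t) under maximal acceleration (a_max until v = v_max, then cruise). -/

import Mathlib

/-- Position at time `t` under maximal braking (deceleration `amin < 0`)
from position `x` with velocity `v ≥ 0`. -/
noncomputable def brakePos (amin x v t : ℝ) : ℝ :=
  x + v * min t (-v / amin) + (amin / 2) * (min t (-v / amin)) ^ 2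

/-- Velocity at time `t` under maximal braking. -/
def brakeVel (amin v t : ℝ) : ℝ :=
  max (v + amin * t) 0

/-- Position at time `t` under maximal acceleration (`amax > 0`, saturating at
`vmax`) from position `x` with velocity `v`. -/
noncomputable def accelPos (amax vmax x v t : ℝ) : ℝ :=
  x + v * min t ((vmax - v) / amax) + (amax / 2) * (min t ((vmax - v) / amax)) ^ 2
    + vmax * max 0 (t - (vmax - v) / amax)

/-- `s ↦ (min s 0)^2` is differentiable with derivative `2 * min s 0`. -/
lemma hasDerivAt_min_sq (τ : ℝ) :
    HasDerivAt (fun s : ℝ => min s 0 ^ 2) (2 * min τ 0) τ := by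
  rcases lt_trichotomy τ 0 with hτ | hτ | hτ
  · have h : (fun s : ℝ => min s 0 ^ 2) =ᶠ[nhds τ] fun s => s ^ 2 := by
      filter_upwards [eventually_lt_nhds hτ] with s hs
      rw [min_eq_left hs.le]
    have : HasDerivAt (fun s : ℝ => s ^ 2) (2 * τ) τ := by
      simpa using (hasDerivAt_pow 2 τ)
    rw [min_eq_left hτ.le]
    exact this.congr_of_eventuallyEq h
  · subst hτ
    rw [hasDerivAt_iff_isLittleO]
    rw [Asymptotics.isLittleO_iff]
    intro c hc
    have h : ∀ᶠ s : ℝ in nhds 0, |s - 0| < c := by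
      have := Metric.ball_mem_nhds (0 : ℝ) hc
      filter_upwards [this] with s hs
      simpa [Real.dist_eq] using hs
    filter_upwards [h] with s hs
    have h1 : min s 0 ^ 2 ≤ s ^ 2 := by
      rcases le_total s 0 with h | h
      · rw [min_eq_left h]
      · rw [min_eq_right h]; simpa using sq_nonneg s
    have h2 : (0:ℝ) ≤ min s 0 ^ 2 := sq_nonneg _
    simp only [min_self, ne_eq, OfNat.ofNat_ne_zero, not_false_eq_true, zero_pow, sub_zero,
      mul_zero, smul_eq_mul, zero_mul]
    rw [Real.norm_eq_abs, Real.norm_eq_abs, abs_of_nonneg h2]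
    calc min s 0 ^ 2 ≤ s ^ 2 := h1
      _ = |s| * |s| := by rw [abs_mul_abs_self]; ring
      _ ≤ c * |s| := by
          apply mul_le_mul_of_nonneg_right _ (abs_nonneg s)
          simpa using hs.le
  · have h : (fun s : ℝ => min s 0 ^ 2) =ᶠ[nhds τ] fun _ => (0:ℝ) := by
      filter_upwards [eventually_gt_nhds hτ] with s hs
      rw [min_eq_right hs.le]
      simp
    rw [min_eq_right hτ.le, mul_zero]
    exact (hasDerivAt_const τ (0:ℝ)).congr_of_eventuallyEq h

lemma brakePos_eq (amin x v : ℝ) (ha : amin < 0) (s : ℝ) :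
    brakePos amin x v s
      = x - (amin / 2) * (-v / amin) ^ 2 + (amin / 2) * min (s - (-v / amin)) 0 ^ 2 := by
  have ha' : amin ≠ 0 := ne_of_lt ha
  have hv : v = -(amin * (-v / amin)) := by field_simp
  have hmin : min (s - (-v / amin)) 0 = min s (-v / amin) - (-v / amin) := by
    rcases le_total s (-v / amin) with h | h
    · rw [min_eq_left (by linarith), min_eq_left h]
    · rw [min_eq_right (by linarith), min_eq_right h]; ring
  rw [brakePos, hmin]
  have : v * min s (-v / amin) = -(amin * (-v / amin)) * min s (-v / amin) := by rw [← hv]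
  rw [this]; ring

lemma hasDerivAt_brakePos (amin x v : ℝ) (ha : amin < 0) (τ : ℝ) :
    HasDerivAt (brakePos amin x v) (brakeVel amin v τ) τ := by
  have ha' : amin ≠ 0 := ne_of_lt ha
  have key : HasDerivAt (fun s => x - (amin / 2) * (-v / amin) ^ 2
      + (amin / 2) * min (s - (-v / amin)) 0 ^ 2)
      (amin * min (τ - (-v / amin)) 0) τ := by
    have h1 : HasDerivAt (fun s : ℝ => s - (-v / amin)) 1 τ :=
      (hasDerivAt_id τ).sub_const _
    have h2 : HasDerivAt (fun s : ℝ => min (s - (-v / amin)) 0 ^ 2)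
        (2 * min (τ - (-v / amin)) 0 * 1) τ := by
      have := (hasDerivAt_min_sq (τ - (-v / amin))).comp τ h1; exact this
    have h3 := (h2.const_mul (amin / 2)).const_add (x - (amin / 2) * (-v / amin) ^ 2)
    exact h3.congr_deriv (by ring)
  have hv : amin * (-v / amin) = -v := by field_simp
  have heq : amin * min (τ - (-v / amin)) 0 = brakeVel amin v τ := by
    rw [brakeVel]
    rcases le_total (τ - (-v / amin)) 0 with h | h
    · rw [min_eq_left h, max_eq_left]
      · rw [mul_sub, hv]; ring
      · nlinarith [mul_nonneg (neg_nonneg.mpr ha.le) (neg_nonneg.mpr h), hv]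
    · rw [min_eq_right h, max_eq_right]
      · ring
      · nlinarith [mul_nonneg (neg_nonneg.mpr ha.le) h, hv]
  rw [← heq]
  have := key
  apply this.congr_of_eventuallyEq
  filter_upwards with s
  rw [brakePos_eq amin x v ha s]

lemma accelPos_eq (amax vmax x v : ℝ) (ha : 0 < amax) (s : ℝ) :
    accelPos amax vmax x v s
      = x + vmax * s - (amax / 2) * ((vmax - v) / amax) ^ 2
        + (amax / 2) * min (s - (vmax - v) / amax) 0 ^ 2 := by
  have ha' : amax ≠ 0 := ne_of_gt ha
  set ta := (vmax - v) / amax with hta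
  have hv : vmax - v = amax * ta := by rw [hta]; field_simp
  have hmax : max 0 (s - ta) = s - min s ta := by
    rcases le_total s ta with h | h
    · rw [max_eq_left (by linarith), min_eq_left h]; ring
    · rw [max_eq_right (by linarith), min_eq_right h]
  have hmin : min (s - ta) 0 = min s ta - ta := by
    rcases le_total s ta with h | h
    · rw [min_eq_left (by linarith), min_eq_left h]
    · rw [min_eq_right (by linarith), min_eq_right h]; ring
  rw [accelPos, ← hta, hmax, hmin]
  linear_combination (-(min s ta)) * hv

lemma hasDerivAt_accelPos (amax vmax x v : ℝ) (ha : 0 < amax) (τ : ℝ) :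
    HasDerivAt (accelPos amax vmax x v) (min (v + amax * τ) vmax) τ := by
  have ha' : amax ≠ 0 := ne_of_gt ha
  set ta := (vmax - v) / amax with hta
  have key : HasDerivAt (fun s => x + vmax * s - (amax / 2) * ta ^ 2
      + (amax / 2) * min (s - ta) 0 ^ 2)
      (vmax + amax * min (τ - ta) 0) τ := by
    have h1 : HasDerivAt (fun s : ℝ => s - ta) 1 τ := (hasDerivAt_id τ).sub_const _
    have h2 : HasDerivAt (fun s : ℝ => min (s - ta) 0 ^ 2)
        (2 * min (τ - ta) 0 * 1) τ := by
          have := (hasDerivAt_min_sq (τ - ta)).comp τ h1; exact this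
    have h3 : HasDerivAt (fun s : ℝ => x + vmax * s - (amax / 2) * ta ^ 2) vmax τ := by
      have := ((hasDerivAt_id τ).const_mul vmax).const_add x
      simpa using (this.sub_const ((amax / 2) * ta ^ 2))
    have h4 := h3.add (h2.const_mul (amax / 2))
    exact h4.congr_deriv (by ring)
  have hv : vmax - v = amax * ta := by rw [hta]; field_simp
  have heq : vmax + amax * min (τ - ta) 0 = min (v + amax * τ) vmax := by
    rcases le_total (τ - ta) 0 with h | h
    · rw [min_eq_left h, min_eq_left]
      · linear_combination hv
      · nlinarith [mul_nonneg ha.le (neg_nonneg.mpr h), hv]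
    · rw [min_eq_right h, min_eq_right]
      · ring
      · nlinarith [mul_nonneg ha.le h, hv]
  rw [← heq]
  apply key.congr_of_eventuallyEq
  filter_upwards with s
  rw [accelPos_eq amax vmax x v ha s]

set_option maxHeartbeats 1000000 in
theorem stmt_6 (vmax amin amax x₀ v₀ t : ℝ)
    (hamin : amin < 0) (hamax : 0 < amax) (hvmax : 0 < vmax)
    (hv₀ : 0 ≤ v₀) (hv₀' : v₀ ≤ vmax) (ht : 0 < t) :
    {p : ℝ | ∃ x v : ℝ → ℝ,
      x 0 = x₀ ∧ v 0 = v₀ ∧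
      (∀ τ ∈ Set.Icc 0 t, HasDerivAt x (v τ) τ) ∧
      (∀ τ ∈ Set.Icc 0 t, 0 ≤ v τ ∧ v τ ≤ vmax) ∧
      (∀ τ₁ ∈ Set.Icc 0 t, ∀ τ₂ ∈ Set.Icc 0 t, τ₁ ≤ τ₂ →
        amin * (τ₂ - τ₁) ≤ v τ₂ - v τ₁ ∧ v τ₂ - v τ₁ ≤ amax * (τ₂ - τ₁)) ∧
      p = x t}
    = Set.Icc (brakePos amin x₀ v₀ t) (accelPos amax vmax x₀ v₀ t) := by
  have htb : 0 ≤ -v₀ / amin := by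
    rw [div_nonneg_iff]; right; constructor <;> linarith
  have hta : 0 ≤ (vmax - v₀) / amax := div_nonneg (by linarith) hamax.le
  have hB0 : brakePos amin x₀ v₀ 0 = x₀ := by
    rw [brakePos, min_eq_left htb]; ring
  have hA0 : accelPos amax vmax x₀ v₀ 0 = x₀ := by
    rw [accelPos, min_eq_left hta, max_eq_left (by linarith)]; ring
  ext p
  simp only [Set.mem_setOf_eq, Set.mem_Icc]
  constructor
  · rintro ⟨x, v, hx0, hv0, hderiv, hbound, hinc, hp⟩
    subst hp
    constructor
    · -- lower bound
      set g : ℝ → ℝ := fun τ => x τ - brakePos amin x₀ v₀ τ with hg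
      have hgd : ∀ τ ∈ Set.Icc 0 t, HasDerivAt g (v τ - brakeVel amin v₀ τ) τ :=
        fun τ hτ => (hderiv τ hτ).sub (hasDerivAt_brakePos amin x₀ v₀ hamin τ)
      have hmono : MonotoneOn g (Set.Icc 0 t) := by
        apply monotoneOn_of_hasDerivWithinAt_nonneg (convex_Icc 0 t)
          (f' := fun τ => v τ - brakeVel amin v₀ τ)
        · exact fun τ hτ => (hgd τ hτ).continuousAt.continuousWithinAt
        · intro τ hτ
          rw [interior_Icc] at hτ
          exact (hgd τ (Set.Ioo_subset_Icc_self hτ)).hasDerivWithinAt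
        · intro τ hτ
          rw [interior_Icc] at hτ
          have h1 := (hinc 0 (Set.left_mem_Icc.mpr ht.le) τ (Set.Ioo_subset_Icc_self hτ)
            hτ.1.le).1
          have h2 := (hbound τ (Set.Ioo_subset_Icc_self hτ)).1
          rw [hv0] at h1
          have : brakeVel amin v₀ τ ≤ v τ := by
            rw [brakeVel]
            apply max_le _ h2
            linarith
          linarith
      have := hmono (Set.left_mem_Icc.mpr ht.le) (Set.right_mem_Icc.mpr ht.le) ht.le
      simp only [hg] at this
      rw [hx0, hB0] at this
      linarith
    · -- upper bound
      set g : ℝ → ℝ := fun τ => accelPos amax vmax x₀ v₀ τ - x τ with hg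
      have hgd : ∀ τ ∈ Set.Icc 0 t,
          HasDerivAt g (min (v₀ + amax * τ) vmax - v τ) τ :=
        fun τ hτ => (hasDerivAt_accelPos amax vmax x₀ v₀ hamax τ).sub (hderiv τ hτ)
      have hmono : MonotoneOn g (Set.Icc 0 t) := by
        apply monotoneOn_of_hasDerivWithinAt_nonneg (convex_Icc 0 t)
          (f' := fun τ => min (v₀ + amax * τ) vmax - v τ)
        · exact fun τ hτ => (hgd τ hτ).continuousAt.continuousWithinAt
        · intro τ hτ
          rw [interior_Icc] at hτ
          exact (hgd τ (Set.Ioo_subset_Icc_self hτ)).hasDerivWithinAt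
        · intro τ hτ
          rw [interior_Icc] at hτ
          have h1 := (hinc 0 (Set.left_mem_Icc.mpr ht.le) τ (Set.Ioo_subset_Icc_self hτ)
            hτ.1.le).2
          have h2 := (hbound τ (Set.Ioo_subset_Icc_self hτ)).2
          rw [hv0] at h1
          have : v τ ≤ min (v₀ + amax * τ) vmax := le_min (by linarith) h2
          linarith
      have := hmono (Set.left_mem_Icc.mpr ht.le) (Set.right_mem_Icc.mpr ht.le) ht.le
      simp only [hg] at this
      rw [hx0, hA0] at this
      linarith
  · rintro ⟨hl, hr⟩
    set B := brakePos amin x₀ v₀ with hBdef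
    set A := accelPos amax vmax x₀ v₀ with hAdef
    have hBA : B t ≤ A t := le_trans hl hr
    obtain ⟨θ, hθ0, hθ1, hθp⟩ : ∃ θ : ℝ, 0 ≤ θ ∧ θ ≤ 1 ∧ B t + θ * (A t - B t) = p := by
      rcases eq_or_lt_of_le hBA with h | h
      · exact ⟨0, le_refl 0, zero_le_one, by rw [zero_mul, add_zero]; linarith⟩
      · refine ⟨(p - B t) / (A t - B t), div_nonneg (by linarith) (by linarith),
          (div_le_one (by linarith)).mpr (by linarith), ?_⟩
        rw [div_mul_cancel₀ _ (sub_ne_zero.mpr (ne_of_gt h))]; ring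
    refine ⟨fun τ => B τ + θ * (A τ - B τ),
      fun τ => brakeVel amin v₀ τ
        + θ * (min (v₀ + amax * τ) vmax - brakeVel amin v₀ τ), ?_, ?_, ?_, ?_, ?_, hθp.symm⟩
    · show B 0 + θ * (A 0 - B 0) = x₀
      rw [hB0, hA0]; ring
    · show brakeVel amin v₀ 0 + θ * (min (v₀ + amax * 0) vmax - brakeVel amin v₀ 0) = v₀
      simp only [brakeVel, mul_zero, add_zero]
      rw [max_eq_left hv₀, min_eq_left (by linarith)]
      ring
    · intro τ _
      exact (hasDerivAt_brakePos amin x₀ v₀ hamin τ).add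
        (((hasDerivAt_accelPos amax vmax x₀ v₀ hamax τ).sub
          (hasDerivAt_brakePos amin x₀ v₀ hamin τ)).const_mul θ)
    · intro τ hτ
      have hτ0 : 0 ≤ τ := hτ.1
      have hb0 : 0 ≤ brakeVel amin v₀ τ := le_max_right _ _
      have hb1 : brakeVel amin v₀ τ ≤ vmax :=
        max_le (by nlinarith [mul_nonneg (neg_nonneg.mpr hamin.le) hτ0]) hvmax.le
      have ha0 : 0 ≤ min (v₀ + amax * τ) vmax :=
        le_min (by nlinarith [mul_nonneg hamax.le hτ0]) hvmax.le
      have ha1 : min (v₀ + amax * τ) vmax ≤ vmax := min_le_right _ _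
      beta_reduce
      constructor
      · nlinarith [mul_nonneg hθ0 ha0, mul_nonneg (sub_nonneg.mpr hθ1) hb0]
      · nlinarith [mul_nonneg hθ0 (sub_nonneg.mpr ha1),
          mul_nonneg (sub_nonneg.mpr hθ1) (sub_nonneg.mpr hb1)]
    · intro τ₁ hτ₁ τ₂ hτ₂ h12
      beta_reduce
      have hΔ : 0 ≤ τ₂ - τ₁ := by linarith
      -- brake increments
      have hbm : brakeVel amin v₀ τ₂ ≤ brakeVel amin v₀ τ₁ :=
        max_le_max (by nlinarith [mul_nonneg (neg_nonneg.mpr hamin.le) hΔ]) (le_refl 0)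
      have hbl : amin * (τ₂ - τ₁) ≤ brakeVel amin v₀ τ₂ - brakeVel amin v₀ τ₁ := by
        have := abs_max_sub_max_le_abs (v₀ + amin * τ₂) (v₀ + amin * τ₁) (0:ℝ)
        rw [abs_le] at this
        have habs : |v₀ + amin * τ₂ - (v₀ + amin * τ₁)| = -(amin * (τ₂ - τ₁)) := by
          rw [abs_of_nonpos (by nlinarith [mul_nonneg (neg_nonneg.mpr hamin.le) hΔ])]; ring
        rw [habs] at this
        simp only [brakeVel]
        linarith [this.1]
      -- accel increments
      have ham : min (v₀ + amax * τ₁) vmax ≤ min (v₀ + amax * τ₂) vmax :=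
        min_le_min (by nlinarith [mul_nonneg hamax.le hΔ]) (le_refl vmax)
      have hal : min (v₀ + amax * τ₂) vmax - min (v₀ + amax * τ₁) vmax
          ≤ amax * (τ₂ - τ₁) := by
        have := abs_min_sub_min_le_max (v₀ + amax * τ₂) vmax (v₀ + amax * τ₁) vmax
        rw [sub_self, abs_zero] at this
        have h2 : |min (v₀ + amax * τ₂) vmax - min (v₀ + amax * τ₁) vmax|
            ≤ |v₀ + amax * τ₂ - (v₀ + amax * τ₁)| := by
          refine le_trans this (max_le (le_refl _) (abs_nonneg _))
        rw [abs_le] at h2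
        have habs : |v₀ + amax * τ₂ - (v₀ + amax * τ₁)| = amax * (τ₂ - τ₁) := by
          rw [abs_of_nonneg (by nlinarith [mul_nonneg hamax.le hΔ])]; ring
        rw [habs] at h2
        linarith [h2.2]
      have hbd : brakeVel amin v₀ τ₂ - brakeVel amin v₀ τ₁ ≤ 0 := by linarith
      have had : 0 ≤ min (v₀ + amax * τ₂) vmax - min (v₀ + amax * τ₁) vmax := by linarith
      have hminΔ : amin * (τ₂ - τ₁) ≤ 0 := mul_nonpos_of_nonpos_of_nonneg hamin.le hΔ
      have hmaxΔ : 0 ≤ amax * (τ₂ - τ₁) := mul_nonneg hamax.le hΔ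
      constructor
      · nlinarith [mul_nonneg hθ0 (by linarith :
            (0:ℝ) ≤ (min (v₀ + amax * τ₂) vmax - min (v₀ + amax * τ₁) vmax)
              - amin * (τ₂ - τ₁)),
          mul_nonneg (sub_nonneg.mpr hθ1) (by linarith :
            (0:ℝ) ≤ (brakeVel amin v₀ τ₂ - brakeVel amin v₀ τ₁) - amin * (τ₂ - τ₁))]
      · nlinarith [mul_nonneg hθ0 (by linarith :
            (0:ℝ) ≤ amax * (τ₂ - τ₁)
              - (min (v₀ + amax * τ₂) vmax - min (v₀ + amax * τ₁) vmax)),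
          mul_nonneg (sub_nonneg.mpr hθ1) (by linarith :
            (0:ℝ) ≤ amax * (τ₂ - τ₁) - (brakeVel amin v₀ τ₂ - brakeVel amin v₀ τ₁))]
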